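/- Let τ be a binary phylogenetic tree on n ≥ 4 leaves and let M be the maximum of ‖σ‖ over all non-trivial splits σ ∈ Σ*(τ). Then ⌈n/3⌉ ≤ M ≤ ⌊n/2⌋. -/

import Mathlib

open SimpleGraph

/-- An (unrooted) phylogenetic tree on `n` leaves with vertex type `V`:
a tree whose degree-one vertices are exactly the images of the `n` leaf labels. -/
structure PhyloTree (n : ℕ) (V : Type) [Fintype V] where
  G : SimpleGraph V
  isTree : G.IsTree
  leaf : Fin n → V
  leaf_inj : Function.Injective leaf
  leaf_iff : ∀ v : V, (G.neighborSet v).ncard = 1 ↔ ∃ i, leaf i = v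

variable {n : ℕ} {V : Type} [Fintype V]

/-- Number of leaves on the `u`-side after deleting the edge `{u,v}`. -/
noncomputable def splitSide (G : SimpleGraph V) (leaf : Fin n → V) (u v : V) : ℕ :=
  {i : Fin n | (G.deleteEdges {s(u, v)}).Reachable (leaf i) u}.ncard

/-- The size `‖σ‖ = min(|A|,|B|)` of the split induced by an edge. -/
noncomputable def splitSizeE (T : PhyloTree n V) : Sym2 V → ℕ :=
  Sym2.lift ⟨fun u v => min (splitSide T.G T.leaf u v) (splitSide T.G T.leaf v u),
    fun _ _ => min_comm _ _⟩

/-- `Φ_f(τ) = ∑_{σ ∈ Σ*(τ)} f(‖σ‖)`, the sum over non-trivial splits (inner edges). -/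
noncomputable def Phi (T : PhyloTree n V) (f : ℕ → ℝ) : ℝ :=
  ∑ᶠ e ∈ {e : Sym2 V | e ∈ T.G.edgeSet ∧ 2 ≤ splitSizeE T e}, f (splitSizeE T e)

/-- `m(τ)_j = |{σ ∈ Σ*(τ) : ‖σ‖ ≤ j}|`. -/
noncomputable def mseq (T : PhyloTree n V) (j : ℕ) : ℕ :=
  {e : Sym2 V | e ∈ T.G.edgeSet ∧ 2 ≤ splitSizeE T e ∧ splitSizeE T e ≤ j}.ncard

/-- The split size sequence `s(τ)_i = min{j : m(τ)_j ≥ i}` (the left inverse of `m(τ)`). -/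
noncomputable def sseq (T : PhyloTree n V) (i : ℕ) : ℕ :=
  sInf {j | i ≤ mseq T j}

def IsLeaf (T : PhyloTree n V) (v : V) : Prop := (T.G.neighborSet v).ncard = 1

/-- A binary (fully resolved) tree: every vertex has degree 1 or 3. -/
def IsBinary (T : PhyloTree n V) : Prop :=
  ∀ v : V, (T.G.neighborSet v).ncard = 1 ∨ (T.G.neighborSet v).ncard = 3

/-- A caterpillar: a binary tree in which every inner vertex is adjacent to a leaf
(equivalently, the inner vertices form a path / there are exactly two cherries). -/
def IsCaterpillar (T : PhyloTree n V) : Prop :=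
  IsBinary T ∧ ∀ v : V, ¬ IsLeaf T v → ∃ w : V, T.G.Adj v w ∧ IsLeaf T w

/-- A single NNI move across the inner edge `{u,v}`: the subtrees hanging at `a`
(on the `u` side) and at `b` (on the `v` side) are swapped. -/
def NNIMove (T T' : PhyloTree n V) : Prop :=
  ∃ u v a b : V, T.G.Adj u v ∧ ¬ IsLeaf T u ∧ ¬ IsLeaf T v ∧
    T.G.Adj u a ∧ T.G.Adj v b ∧ a ≠ v ∧ b ≠ u ∧
    T'.leaf = T.leaf ∧
    T'.G.edgeSet = (T.G.edgeSet \ {s(u, a), s(v, b)}) ∪ {s(u, b), s(v, a)}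

/-- The number of cherries = number of non-trivial splits of size exactly 2. -/
noncomputable def numCherries (T : PhyloTree n V) : ℕ :=
  {e : Sym2 V | e ∈ T.G.edgeSet ∧ splitSizeE T e = 2}.ncard

set_option linter.unusedSectionVars false

lemma swapSet (a b : V) : ({s(a, b)} : Set (Sym2 V)) = {s(b, a)} := by
  rw [Sym2.eq_swap]

lemma bridge' (T : PhyloTree n V) {u v : V} (h : T.G.Adj u v) :
    ¬ (T.G.deleteEdges {s(u,v)}).Reachable u v :=
  (isBridge_iff.mp (isAcyclic_iff_forall_adj_isBridge.mp T.isTree.IsAcyclic h))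

lemma not_both (T : PhyloTree n V) {u v w : V} (h : T.G.Adj u v)
    (h1 : (T.G.deleteEdges {s(u,v)}).Reachable w u)
    (h2 : (T.G.deleteEdges {s(u,v)}).Reachable w v) : False :=
  bridge' T h (h1.symm.trans h2)

lemma step1 (T : PhyloTree n V) {u v w x : V} (h' : T.G.Adj w x)
    (hx : (T.G.deleteEdges {s(u,v)}).Reachable x u) :
    w = v ∨ (T.G.deleteEdges {s(u,v)}).Reachable w u := by
  by_cases he : s(w,x) = s(u,v)
  · rcases Sym2.eq_iff.mp he with ⟨rfl, rfl⟩ | ⟨rfl, rfl⟩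
    · exact Or.inr (Reachable.refl _)
    · exact Or.inl rfl
  · exact Or.inr ((SimpleGraph.deleteEdges_adj.mpr ⟨h', by simpa using he⟩).reachable.trans hx)

lemma cover (T : PhyloTree n V) {u v : V} (h : T.G.Adj u v) (w : V) :
    (T.G.deleteEdges {s(u,v)}).Reachable w u ∨ (T.G.deleteEdges {s(u,v)}).Reachable w v := by
  have key : ∀ {a t : V}, T.G.Walk a t →
      ((T.G.deleteEdges {s(u,v)}).Reachable t u ∨ (T.G.deleteEdges {s(u,v)}).Reachable t v) →
      ((T.G.deleteEdges {s(u,v)}).Reachable a u ∨ (T.G.deleteEdges {s(u,v)}).Reachable a v) := by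
    intro a t p
    induction p with
    | nil => exact id
    | cons h' p ih =>
      intro ht
      rcases ih ht with hx | hx
      · rcases step1 T h' hx with rfl | hr
        · exact Or.inr (Reachable.refl _)
        · exact Or.inl hr
      · rcases step1 (u := v) (v := u) T h' (by rwa [swapSet v u]) with rfl | hr
        · exact Or.inl (Reachable.refl _)
        · exact Or.inr (by rwa [swapSet v u] at hr)
  obtain ⟨p⟩ := T.isTree.isConnected.preconnected w u
  exact key p (Or.inl (Reachable.refl _))

lemma mapsTo (T : PhyloTree n V) {v a c : V} (hva : T.G.Adj v a) (hvc : T.G.Adj v c)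
    (hac : a ≠ c) {w : V} (hw : (T.G.deleteEdges {s(v,a)}).Reachable w a) :
    (T.G.deleteEdges {s(v,c)}).Reachable w v := by
  have key : ∀ {x t : V}, (T.G.deleteEdges {s(v,a)}).Walk x t →
      ((T.G.deleteEdges {s(v,c)}).Reachable t v ∨ (T.G.deleteEdges {s(v,a)}).Reachable v t) →
      ((T.G.deleteEdges {s(v,c)}).Reachable x v ∨ (T.G.deleteEdges {s(v,a)}).Reachable v t) := by
    intro x t p
    induction p with
    | nil => exact id
    | @cons x y t h' p ih =>
      intro ht
      rcases ih ht with hy | hy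
      · by_cases he : s(x, y) = s(v, c)
        · rcases Sym2.eq_iff.mp he with ⟨rfl, rfl⟩ | ⟨rfl, rfl⟩
          · exact Or.inl (Reachable.refl _)
          · exact Or.inr ⟨p⟩
        · have hGxy : T.G.Adj x y := ((SimpleGraph.deleteEdges_adj.mp h').1)
          exact Or.inl ((SimpleGraph.deleteEdges_adj.mpr ⟨hGxy, by simpa using he⟩).reachable.trans hy)
      · exact Or.inr hy
  obtain ⟨p⟩ := hw
  have hseed : (T.G.deleteEdges {s(v,c)}).Reachable a v := by
    refine Adj.reachable (SimpleGraph.deleteEdges_adj.mpr ⟨hva.symm, ?_⟩)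
    simp only [Set.mem_singleton_iff, Sym2.eq_iff]
    rintro (⟨rfl, rfl⟩ | ⟨rfl, -⟩)
    · exact hva.ne rfl
    · exact hac rfl
  rcases key p (Or.inl hseed) with h1 | h2
  · exact h1
  · exact absurd h2 (bridge' T hva)

lemma leaf_nbhd (T : PhyloTree n V) {x y : V} (hx : (T.G.neighborSet x).ncard = 1)
    (hxy : T.G.Adj x y) : T.G.neighborSet x = {y} := by
  obtain ⟨z, hz⟩ := Set.ncard_eq_one.mp hx
  have hy : y ∈ T.G.neighborSet x := hxy
  rw [hz] at hy ⊢
  simp only [Set.mem_singleton_iff] at hy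
  rw [hy]

lemma leaf_component (T : PhyloTree n V) {x y : V} (hx : (T.G.neighborSet x).ncard = 1)
    (hxy : T.G.Adj x y) {w : V} (hw : (T.G.deleteEdges {s(x,y)}).Reachable w x) : w = x := by
  obtain ⟨p⟩ := hw.symm
  cases p with
  | nil => rfl
  | @cons _ z _ h' p =>
    rw [SimpleGraph.deleteEdges_adj] at h'
    have hz : z ∈ T.G.neighborSet x := h'.1
    rw [leaf_nbhd T hx hxy] at hz
    simp only [Set.mem_singleton_iff] at hz
    subst hz
    exact absurd rfl h'.2

lemma splitSide_leaf (T : PhyloTree n V) {x y : V} (hx : (T.G.neighborSet x).ncard = 1)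
    (hxy : T.G.Adj x y) : splitSide T.G T.leaf x y = 1 := by
  obtain ⟨i0, hi0⟩ := (T.leaf_iff x).mp hx
  have hset : {i : Fin n | (T.G.deleteEdges {s(x,y)}).Reachable (T.leaf i) x} = {i0} := by
    ext i
    simp only [Set.mem_setOf_eq, Set.mem_singleton_iff]
    constructor
    · intro h
      exact T.leaf_inj (by rw [hi0]; exact leaf_component T hx hxy h)
    · rintro rfl
      rw [hi0]
  rw [splitSide, hset, Set.ncard_singleton]

lemma splitSide_add (T : PhyloTree n V) {u v : V} (hA : T.G.Adj u v) :
    splitSide T.G T.leaf u v + splitSide T.G T.leaf v u = n := by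
  have hU : {i : Fin n | (T.G.deleteEdges {s(u,v)}).Reachable (T.leaf i) u} ∪
      {i : Fin n | (T.G.deleteEdges {s(u,v)}).Reachable (T.leaf i) v} = Set.univ := by
    ext i
    simpa using cover T hA (T.leaf i)
  have hD : Disjoint {i : Fin n | (T.G.deleteEdges {s(u,v)}).Reachable (T.leaf i) u}
      {i : Fin n | (T.G.deleteEdges {s(u,v)}).Reachable (T.leaf i) v} := by
    rw [Set.disjoint_left]
    intro i h1 h2
    exact not_both T hA h1 h2
  have := Set.ncard_union_eq hD (Set.toFinite _) (Set.toFinite _)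
  rw [hU, Set.ncard_univ, Nat.card_eq_fintype_card, Fintype.card_fin] at this
  rw [splitSide, splitSide, swapSet v u]
  omega

lemma three_nbrs (T : PhyloTree n V) {v u : V} (h3 : (T.G.neighborSet v).ncard = 3)
    (hu : T.G.Adj v u) : ∃ a b, a ≠ b ∧ a ≠ u ∧ b ≠ u ∧ T.G.neighborSet v = {u, a, b} := by
  obtain ⟨x, y, z, hxy, hxz, hyz, hs⟩ := Set.ncard_eq_three.mp h3
  have hu' : u ∈ T.G.neighborSet v := hu
  rw [hs] at hu'
  simp only [Set.mem_insert_iff, Set.mem_singleton_iff] at hu'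
  rcases hu' with rfl | rfl | rfl
  · exact ⟨y, z, hyz, fun h => hxy h.symm, fun h => hxz h.symm, hs⟩
  · exact ⟨x, z, hxz, hxy, fun h => hyz h.symm,
      by rw [hs]; ext w; simp; tauto⟩
  · exact ⟨x, y, hxy, hxz, hyz, by rw [hs]; ext w; simp; tauto⟩

lemma cover3 (T : PhyloTree n V) {v u a b : V}
    (hnb : T.G.neighborSet v = {u, a, b}) (w : V) :
    w = v ∨ (T.G.deleteEdges {s(v,u)}).Reachable w u ∨
      (T.G.deleteEdges {s(v,a)}).Reachable w a ∨
      (T.G.deleteEdges {s(v,b)}).Reachable w b := by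
  have key : ∀ {x t : V}, T.G.Walk x t →
      (t = v ∨ (T.G.deleteEdges {s(v,u)}).Reachable t u ∨
        (T.G.deleteEdges {s(v,a)}).Reachable t a ∨
        (T.G.deleteEdges {s(v,b)}).Reachable t b) →
      (x = v ∨ (T.G.deleteEdges {s(v,u)}).Reachable x u ∨
        (T.G.deleteEdges {s(v,a)}).Reachable x a ∨
        (T.G.deleteEdges {s(v,b)}).Reachable x b) := by
    intro x t p
    induction p with
    | nil => exact id
    | @cons x y t h' p ih =>
      intro ht
      rcases ih ht with rfl | hy | hy | hy
      · have hx : x ∈ T.G.neighborSet y := h'.symm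
        rw [hnb] at hx
        simp only [Set.mem_insert_iff, Set.mem_singleton_iff] at hx
        rcases hx with rfl | rfl | rfl
        · exact Or.inr (Or.inl (Reachable.refl _))
        · exact Or.inr (Or.inr (Or.inl (Reachable.refl _)))
        · exact Or.inr (Or.inr (Or.inr (Reachable.refl _)))
      · rcases step1 (u := u) (v := v) T h' (by rwa [← swapSet u v] at hy) with rfl | hr
        · exact Or.inl rfl
        · exact Or.inr (Or.inl (by rwa [swapSet u v] at hr))
      · rcases step1 (u := a) (v := v) T h' (by rwa [← swapSet a v] at hy) with rfl | hr
        · exact Or.inl rfl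
        · exact Or.inr (Or.inr (Or.inl (by rwa [swapSet a v] at hr)))
      · rcases step1 (u := b) (v := v) T h' (by rwa [← swapSet b v] at hy) with rfl | hr
        · exact Or.inl rfl
        · exact Or.inr (Or.inr (Or.inr (by rwa [swapSet b v] at hr)))
  obtain ⟨p⟩ := T.isTree.isConnected.preconnected w v
  exact key p (Or.inl rfl)

lemma not_leaf_of_three (T : PhyloTree n V) {v : V} (h3 : (T.G.neighborSet v).ncard = 3) :
    ∀ i, T.leaf i ≠ v := by
  intro i hi
  have := (T.leaf_iff v).mpr ⟨i, hi⟩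
  omega

lemma splitSide_internal (T : PhyloTree n V) {v u a b : V}
    (hnb : T.G.neighborSet v = {u, a, b}) (hab : a ≠ b) (hau : a ≠ u) (hbu : b ≠ u)
    (h3 : (T.G.neighborSet v).ncard = 3) :
    splitSide T.G T.leaf v u = splitSide T.G T.leaf a v + splitSide T.G T.leaf b v := by
  have hvu : T.G.Adj v u := by rw [← SimpleGraph.mem_neighborSet, hnb]; simp
  have hva : T.G.Adj v a := by rw [← SimpleGraph.mem_neighborSet, hnb]; simp
  have hvb : T.G.Adj v b := by rw [← SimpleGraph.mem_neighborSet, hnb]; simp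
  have hset : {i : Fin n | (T.G.deleteEdges {s(v,u)}).Reachable (T.leaf i) v} =
      {i : Fin n | (T.G.deleteEdges {s(v,a)}).Reachable (T.leaf i) a} ∪
      {i : Fin n | (T.G.deleteEdges {s(v,b)}).Reachable (T.leaf i) b} := by
    ext i
    simp only [Set.mem_setOf_eq, Set.mem_union]
    constructor
    · intro h
      rcases cover3 T hnb (T.leaf i) with hv | hu' | ha' | hb'
      · exact absurd hv (not_leaf_of_three T h3 i)
      · exact absurd (h.symm.trans hu') (bridge' T hvu)
      · exact Or.inl ha'
      · exact Or.inr hb'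
    · rintro (h | h)
      · exact mapsTo T hva hvu hau h
      · exact mapsTo T hvb hvu hbu h
  have hD : Disjoint {i : Fin n | (T.G.deleteEdges {s(v,a)}).Reachable (T.leaf i) a}
      {i : Fin n | (T.G.deleteEdges {s(v,b)}).Reachable (T.leaf i) b} := by
    rw [Set.disjoint_left]
    intro i h1 h2
    exact bridge' T hvb ((mapsTo T hva hvb hab h1).symm.trans h2)
  rw [splitSide, splitSide, splitSide, swapSet a v, swapSet b v, hset,
    Set.ncard_union_eq hD (Set.toFinite _) (Set.toFinite _)]

lemma splitSide_pos (T : PhyloTree n V) (hbin : IsBinary T) :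
    ∀ m (x y : V), T.G.Adj x y →
      ({w | (T.G.deleteEdges {s(x,y)}).Reachable w x}).ncard = m →
      ∃ i, (T.G.deleteEdges {s(x,y)}).Reachable (T.leaf i) x := by
  intro m
  induction m using Nat.strong_induction_on with
  | _ m ih =>
    intro x y hxy hm
    rcases hbin x with h1 | h3
    · obtain ⟨i, hi⟩ := (T.leaf_iff x).mp h1
      exact ⟨i, by rw [hi]⟩
    · obtain ⟨a, b, hab, hay, hby, hnb⟩ := three_nbrs T h3 hxy
      have hxa : T.G.Adj x a := by rw [← SimpleGraph.mem_neighborSet, hnb]; simp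
      have hsub : {w | (T.G.deleteEdges {s(x,a)}).Reachable w a} ⊆
          {w | (T.G.deleteEdges {s(x,y)}).Reachable w x} :=
        fun w hw => mapsTo T hxa hxy hay hw
      have hx_notin : x ∉ {w | (T.G.deleteEdges {s(x,a)}).Reachable w a} :=
        fun h => bridge' T hxa h
      have hss : {w | (T.G.deleteEdges {s(x,a)}).Reachable w a} ⊂
          {w | (T.G.deleteEdges {s(x,y)}).Reachable w x} :=
        ⟨hsub, fun hc => hx_notin (hc (Reachable.refl x))⟩
      have hlt : ({w | (T.G.deleteEdges {s(x,a)}).Reachable w a}).ncard < m :=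
        hm ▸ Set.ncard_lt_ncard hss (Set.toFinite _)
      obtain ⟨i, hi⟩ := ih _ hlt a x hxa.symm (by rw [swapSet a x])
      rw [swapSet a x] at hi
      exact ⟨i, hsub hi⟩

lemma splitSide_one_le (T : PhyloTree n V) (hbin : IsBinary T) {x y : V} (h : T.G.Adj x y) :
    1 ≤ splitSide T.G T.leaf x y := by
  obtain ⟨i, hi⟩ := splitSide_pos T hbin _ x y h rfl
  rw [splitSide]
  exact (Set.ncard_pos (Set.toFinite _)).mpr ⟨i, hi⟩

lemma splitSizeE_mk (T : PhyloTree n V) (u v : V) :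
    splitSizeE T s(u,v) = min (splitSide T.G T.leaf u v) (splitSide T.G T.leaf v u) := rfl

lemma exists_internal (hn : 4 ≤ n) (T : PhyloTree n V) (hbin : IsBinary T) :
    ∃ v, (T.G.neighborSet v).ncard = 3 := by
  have h0 : (0 : ℕ) < n := by omega
  have h1 : (1 : ℕ) < n := by omega
  have h2 : (2 : ℕ) < n := by omega
  set l0 := T.leaf ⟨0, h0⟩
  set l1 := T.leaf ⟨1, h1⟩
  set l2 := T.leaf ⟨2, h2⟩
  have hl0 : (T.G.neighborSet l0).ncard = 1 := (T.leaf_iff l0).mpr ⟨_, rfl⟩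
  have h01 : l0 ≠ l1 := fun h => by simpa using congrArg Fin.val (T.leaf_inj h)
  have h02 : l0 ≠ l2 := fun h => by simpa using congrArg Fin.val (T.leaf_inj h)
  have hpair : ∃ x z : V, x ≠ z ∧ ¬ T.G.Adj x z := by
    by_cases hA : T.G.Adj l0 l1
    · refine ⟨l0, l2, h02, fun hA2 => ?_⟩
      have := leaf_nbhd T hl0 hA
      have hmem : l2 ∈ T.G.neighborSet l0 := hA2
      rw [this] at hmem
      simp only [Set.mem_singleton_iff] at hmem
      exact absurd (T.leaf_inj hmem) (by simp [Fin.ext_iff])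
    · exact ⟨l0, l1, h01, hA⟩
  obtain ⟨x, z, hxz, hnadj⟩ := hpair
  haveI := Classical.decEq V
  obtain ⟨p⟩ := T.isTree.isConnected.preconnected x z
  obtain ⟨q, hq⟩ := p.toPath
  cases q with
  | nil => exact absurd rfl hxz
  | @cons _ w1 _ hxw q' =>
    cases q' with
    | nil => exact absurd hxw hnadj
    | @cons _ w2 _ hw12 q'' =>
      rw [Walk.cons_isPath_iff] at hq
      have hxne : x ≠ w2 := by
        intro h
        apply hq.2
        rw [Walk.support_cons]
        exact List.mem_cons_of_mem _ (h ▸ Walk.start_mem_support q'')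
      have hlt : 1 < (T.G.neighborSet w1).ncard :=
        (Set.one_lt_ncard (Set.toFinite _)).mpr ⟨x, hxw.symm, w2, hw12, hxne⟩
      exact ⟨w1, (hbin w1).resolve_left (by omega)⟩

lemma exists_inner (hn : 4 ≤ n) (T : PhyloTree n V) (hbin : IsBinary T) :
    ∃ u v : V, T.G.Adj u v ∧ 2 ≤ splitSide T.G T.leaf u v ∧ 2 ≤ splitSide T.G T.leaf v u := by
  obtain ⟨v, h3⟩ := exists_internal hn T hbin
  obtain ⟨x, y, z, hxy, hxz, hyz, hs⟩ := Set.ncard_eq_three.mp h3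
  have hvx : T.G.Adj v x := by rw [← SimpleGraph.mem_neighborSet, hs]; simp
  have hvy : T.G.Adj v y := by rw [← SimpleGraph.mem_neighborSet, hs]; simp
  have hvz : T.G.Adj v z := by rw [← SimpleGraph.mem_neighborSet, hs]; simp
  have e1 : splitSide T.G T.leaf v x = splitSide T.G T.leaf y v + splitSide T.G T.leaf z v :=
    splitSide_internal T hs hyz (fun h => hxy h.symm) (fun h => hxz h.symm) h3
  have e2 : splitSide T.G T.leaf v y = splitSide T.G T.leaf x v + splitSide T.G T.leaf z v :=
    splitSide_internal T (by rw [hs]; ext w; simp; tauto) hxz hxy (fun h => hyz h.symm) h3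
  have e3 : splitSide T.G T.leaf v z = splitSide T.G T.leaf x v + splitSide T.G T.leaf y v :=
    splitSide_internal T (by rw [hs]; ext w; simp; tauto) hxy hxz hyz h3
  have t1 : splitSide T.G T.leaf x v + splitSide T.G T.leaf v x = n := splitSide_add T hvx.symm
  have p1 : 1 ≤ splitSide T.G T.leaf x v := splitSide_one_le T hbin hvx.symm
  have p2 : 1 ≤ splitSide T.G T.leaf y v := splitSide_one_le T hbin hvy.symm
  have p3 : 1 ≤ splitSide T.G T.leaf z v := splitSide_one_le T hbin hvz.symm
  have hcase : 2 ≤ splitSide T.G T.leaf x v ∨ 2 ≤ splitSide T.G T.leaf y v ∨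
      2 ≤ splitSide T.G T.leaf z v := by omega
  rcases hcase with h | h | h
  · exact ⟨x, v, hvx.symm, h, by omega⟩
  · have t2 : splitSide T.G T.leaf y v + splitSide T.G T.leaf v y = n := splitSide_add T hvy.symm
    exact ⟨y, v, hvy.symm, h, by omega⟩
  · have t3 : splitSide T.G T.leaf z v + splitSide T.G T.leaf v z = n := splitSide_add T hvz.symm
    exact ⟨z, v, hvz.symm, h, by omega⟩

lemma size_le_half (T : PhyloTree n V) {e : Sym2 V} (he : e ∈ T.G.edgeSet) :
    splitSizeE T e ≤ n / 2 := by
  revert he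
  induction e using Sym2.ind with
  | _ u v =>
    intro he
    rw [SimpleGraph.mem_edgeSet] at he
    have := splitSide_add T he
    rw [splitSizeE_mk]
    omega

lemma key_lower (T : PhyloTree n V) (hbin : IsBinary T) {u v : V} {M : ℕ}
    (huv : T.G.Adj u v) (h2 : 2 ≤ M) (hMe : splitSide T.G T.leaf u v = M)
    (hle : M ≤ splitSide T.G T.leaf v u)
    (hmax : ∀ u' v' : V, T.G.Adj u' v' → 2 ≤ splitSide T.G T.leaf u' v' →
      2 ≤ splitSide T.G T.leaf v' u' →
      min (splitSide T.G T.leaf u' v') (splitSide T.G T.leaf v' u') ≤ M) :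
    n ≤ 3 * M := by
  have hvnl : (T.G.neighborSet v).ncard ≠ 1 := by
    intro h1
    have := splitSide_leaf T h1 huv.symm
    omega
  have h3 := (hbin v).resolve_left hvnl
  obtain ⟨a, b, hab, hau, hbu, hnb⟩ := three_nbrs T h3 huv.symm
  have hva : T.G.Adj v a := by rw [← SimpleGraph.mem_neighborSet, hnb]; simp
  have hvb : T.G.Adj v b := by rw [← SimpleGraph.mem_neighborSet, hnb]; simp
  have hsum : splitSide T.G T.leaf v u =
      splitSide T.G T.leaf a v + splitSide T.G T.leaf b v :=
    splitSide_internal T hnb hab hau hbu h3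
  have htot : splitSide T.G T.leaf u v + splitSide T.G T.leaf v u = n := splitSide_add T huv
  have ha1 : 1 ≤ splitSide T.G T.leaf a v := splitSide_one_le T hbin hva.symm
  have hb1 : 1 ≤ splitSide T.G T.leaf b v := splitSide_one_le T hbin hvb.symm
  have hA : splitSide T.G T.leaf a v ≤ M := by
    by_cases hA2 : 2 ≤ splitSide T.G T.leaf a v
    · have htot2 : splitSide T.G T.leaf a v + splitSide T.G T.leaf v a = n :=
        splitSide_add T hva.symm
      have := hmax a v hva.symm hA2 (by omega)
      omega
    · omega
  have hB : splitSide T.G T.leaf b v ≤ M := by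
    by_cases hB2 : 2 ≤ splitSide T.G T.leaf b v
    · have htot2 : splitSide T.G T.leaf b v + splitSide T.G T.leaf v b = n :=
        splitSide_add T hvb.symm
      have := hmax b v hvb.symm hB2 (by omega)
      omega
    · omega
  omega

/-- Lemma (bounds): for a binary tree on `n ≥ 4` leaves, the maximal non-trivial
split size `M` satisfies `⌈n/3⌉ ≤ M ≤ ⌊n/2⌋`. -/
theorem stmt_11 {n : ℕ} (hn : 4 ≤ n) {V : Type} [Fintype V]
    (T : PhyloTree n V) (hbin : IsBinary T) :
    (n + 2) / 3 ≤ sSup {k | ∃ e ∈ T.G.edgeSet, 2 ≤ splitSizeE T e ∧ splitSizeE T e = k} ∧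
      sSup {k | ∃ e ∈ T.G.edgeSet, 2 ≤ splitSizeE T e ∧ splitSizeE T e = k} ≤ n / 2 := by
  set S := {k | ∃ e ∈ T.G.edgeSet, 2 ≤ splitSizeE T e ∧ splitSizeE T e = k} with hS
  obtain ⟨u0, v0, ha0, h20, h30⟩ := exists_inner hn T hbin
  have hne : S.Nonempty := ⟨splitSizeE T s(u0, v0), s(u0, v0),
    (T.G.mem_edgeSet).mpr ha0, by rw [splitSizeE_mk]; exact le_min h20 h30, rfl⟩
  have hbdd : BddAbove S := ⟨n / 2, by
    rintro k ⟨e, he, _, rfl⟩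
    exact size_le_half T he⟩
  have hmem := Nat.sSup_mem hne hbdd
  refine ⟨?_, csSup_le hne ?_⟩
  swap
  · rintro k ⟨e, he, _, rfl⟩
    exact size_le_half T he
  obtain ⟨e, he, h2e, heq⟩ := hmem
  have hex : ∃ x y, e = s(x, y) := by
    induction e using Sym2.ind with
    | _ x y => exact ⟨x, y, rfl⟩
  obtain ⟨u, v, rfl⟩ := hex
  have huv := (T.G.mem_edgeSet).mp he
  rw [splitSizeE_mk] at h2e heq
  have hmax : ∀ u' v' : V, T.G.Adj u' v' → 2 ≤ splitSide T.G T.leaf u' v' →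
      2 ≤ splitSide T.G T.leaf v' u' →
      min (splitSide T.G T.leaf u' v') (splitSide T.G T.leaf v' u') ≤ sSup S := by
    intro u' v' ha' h2' h3'
    exact le_csSup hbdd ⟨s(u', v'), (T.G.mem_edgeSet).mpr ha',
      by rw [splitSizeE_mk]; exact le_min h2' h3', (splitSizeE_mk T u' v')⟩
  rcases le_total (splitSide T.G T.leaf u v) (splitSide T.G T.leaf v u) with hle | hle
  · have hMe : splitSide T.G T.leaf u v = sSup S := by omega
    have := key_lower T hbin huv (by omega) hMe (by omega) hmax
    omega
  · have hMe : splitSide T.G T.leaf v u = sSup S := by omega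
    have := key_lower T hbin huv.symm (by omega) hMe (by omega) hmax
    omega
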